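/- Let β > 0 and 0 < P₁ < 1, and let F_β(e) = (1+β²)(P₁ − e₁)/((1+β²)P₁ + e₂ − e₁) on D₀ = [0, P₁] × [0, 1 − P₁]. Then for all e, e' ∈ D₀ with F_β(e') > F_β(e), setting t' = F_β(e'), one has F_β(e') − F_β(e) ≤ (1/(β²P₁)) · [ (1+β² − t')(e₁ − e'₁) + t'(e₂ − e'₂) ]. -/
import Mathlib


/-- The binary `F_β`-measure as a function of the false-negative probability `e₁`
and the false-positive probability `e₂`. -/
noncomputable def binaryFbeta (β P₁ e₁ e₂ : ℝ) : ℝ :=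
  (1 + β ^ 2) * (P₁ - e₁) / ((1 + β ^ 2) * P₁ + e₂ - e₁)

/-- Discretization-factor bound for the binary `F_β`-measure: for error profiles
`e, e'` in `D₀ = [0,P₁] × [0,1−P₁]` with `F_β(e') > F_β(e)` and `t' = F_β(e')`,
`F_β(e') − F_β(e) ≤ (1/(β²P₁))·[(1+β²−t')(e₁−e'₁) + t'(e₂−e'₂)]`. -/
theorem binary_Fbeta_discretization_bound (β P₁ : ℝ) (hβ : 0 < β)
    (hP₁ : 0 < P₁) (hP₁' : P₁ < 1) (e₁ e₂ e₁' e₂' : ℝ)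
    (he₁ : e₁ ∈ Set.Icc 0 P₁) (he₂ : e₂ ∈ Set.Icc 0 (1 - P₁))
    (he₁' : e₁' ∈ Set.Icc 0 P₁) (he₂' : e₂' ∈ Set.Icc 0 (1 - P₁))
    (hlt : binaryFbeta β P₁ e₁' e₂' > binaryFbeta β P₁ e₁ e₂) :
    binaryFbeta β P₁ e₁' e₂' - binaryFbeta β P₁ e₁ e₂ ≤
      (1 / (β ^ 2 * P₁)) *
        ((1 + β ^ 2 - binaryFbeta β P₁ e₁' e₂') * (e₁ - e₁') +
          binaryFbeta β P₁ e₁' e₂' * (e₂ - e₂')) := by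
  obtain ⟨h1, h2⟩ := he₁
  obtain ⟨h3, h4⟩ := he₂
  obtain ⟨h5, h6⟩ := he₁'
  obtain ⟨h7, h8⟩ := he₂'
  have hβ2 : 0 < β ^ 2 * P₁ := by positivity
  set D : ℝ := (1 + β ^ 2) * P₁ + e₂ - e₁ with hDdef
  set D' : ℝ := (1 + β ^ 2) * P₁ + e₂' - e₁' with hD'def
  have hD : β ^ 2 * P₁ ≤ D := by simp only [hDdef]; nlinarith
  have hD' : β ^ 2 * P₁ ≤ D' := by simp only [hD'def]; nlinarith
  have hDpos : 0 < D := lt_of_lt_of_le hβ2 hD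
  have hD'pos : 0 < D' := lt_of_lt_of_le hβ2 hD'
  set t' : ℝ := binaryFbeta β P₁ e₁' e₂' with ht'def
  have ht' : t' * D' = (1 + β ^ 2) * (P₁ - e₁') := by
    rw [ht'def, binaryFbeta, ← hD'def, div_mul_cancel₀ _ hD'pos.ne']
  set K : ℝ := (1 + β ^ 2 - t') * (e₁ - e₁') + t' * (e₂ - e₂') with hKdef
  have hdiff : t' - binaryFbeta β P₁ e₁ e₂ = K / D := by
    rw [binaryFbeta, ← hDdef, hKdef]
    field_simp
    simp only [hDdef, hD'def] at ht' ⊢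
    linear_combination ht'
  have hK : 0 ≤ K := by
    have hpos : 0 < K / D := by rw [← hdiff]; linarith [hlt]
    nlinarith [mul_pos hpos hDpos, div_mul_cancel₀ K hDpos.ne']
  rw [hdiff, one_div, inv_mul_eq_div]
  exact div_le_div_of_nonneg_left hK hβ2 hD
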